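/- There exists n₀ ∈ ℕ such that for every n ≥ n₀ the following holds. Let F be the n-fold product on [0,∞)^n of the Borel probability measure on [0,∞) that assigns probability 1/2 each to the values 0 and 1. Then every IR menu M of menu size at most 2^{n/10}, equipped with any choice function t, satisfies Rev_{M,t}(F) < (1 − 1/(10·n)) · (n/2). Consequently Rev_C(F) ≤ (1 − 1/(10·n)) · Rev(F) for C = ⌊2^{n/10}⌋, so the revenue-approximation complexity C(n, 1/n) is at least 2^{Ω(n)}. -/

import Mathlib

open MeasureTheory ProbabilityTheory Set
open scoped NNReal ENNReal

noncomputable section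

/-- The space of buyer types for `n` items: vectors in `[0,∞)^n`. -/
abbrev BuyerType (n : ℕ) := Fin n → ℝ≥0

/-- An `n`-item outcome: allocation probabilities together with a price. -/
abbrev Outcome (n : ℕ) := (Fin n → ℝ) × ℝ

/-- An outcome is valid if all allocation probabilities are in `[0,1]` and the price is `≥ 0`. -/
def ValidOutcome {n : ℕ} (e : Outcome n) : Prop :=
  (∀ i, 0 ≤ e.1 i ∧ e.1 i ≤ 1) ∧ 0 ≤ e.2

/-- The zero entry `(0,…,0;0)`. -/
def zeroEntry (n : ℕ) : Outcome n := (fun _ => 0, 0)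

/-- The utility of buyer type `v` from outcome `e`. -/
def utility {n : ℕ} (e : Outcome n) (v : BuyerType n) : ℝ :=
  (∑ i, e.1 i * (v i : ℝ)) - e.2

/-- An individually rational menu: a set of valid outcomes containing the zero entry. -/
def IRMenu {n : ℕ} (M : Set (Outcome n)) : Prop :=
  (∀ e ∈ M, ValidOutcome e) ∧ zeroEntry n ∈ M

/-- A choice function for menu `M`: for every buyer type it picks a utility-maximizing
entry of maximal price among the utility-maximizing entries, with Borel-measurable price. -/
def IsChoice {n : ℕ} (M : Set (Outcome n)) (t : BuyerType n → Outcome n) : Prop :=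
  (∀ v, t v ∈ M) ∧
  (∀ v, ∀ e ∈ M, utility e v ≤ utility (t v) v) ∧
  (∀ v, ∀ e ∈ M, utility e v = utility (t v) v → e.2 ≤ (t v).2) ∧
  Measurable fun v => (t v).2

/-- The revenue of a menu equipped with choice function `t` from distribution `F`. -/
def revenue {n : ℕ} (t : BuyerType n → Outcome n) (F : Measure (BuyerType n)) : ℝ≥0∞ :=
  ∫⁻ v, ENNReal.ofReal ((t v).2) ∂F

/-- The menu size: the number of entries other than the zero entry. -/
def menuSize {n : ℕ} (M : Set (Outcome n)) : ℕ∞ :=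
  (M \ {zeroEntry n}).encard

/-- The optimal revenue obtainable from `F` by an IR menu with a choice function. -/
def Rev {n : ℕ} (F : Measure (BuyerType n)) : ℝ≥0∞ :=
  ⨆ (Mt : Set (Outcome n) × (BuyerType n → Outcome n))
    (_ : IRMenu Mt.1 ∧ IsChoice Mt.1 Mt.2), revenue Mt.2 F

/-- The optimal revenue obtainable from `F` by an IR menu of menu size at most `C`. -/
def RevC {n : ℕ} (C : ℕ) (F : Measure (BuyerType n)) : ℝ≥0∞ :=
  ⨆ (Mt : Set (Outcome n) × (BuyerType n → Outcome n))
    (_ : IRMenu Mt.1 ∧ IsChoice Mt.1 Mt.2 ∧ menuSize Mt.1 ≤ (C : ℕ∞)),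
    revenue Mt.2 F

/-- Embedding of a single item value as a buyer type for one item. -/
def toOne (x : ℝ≥0) : BuyerType 1 := fun _ => x

/-- The optimal single-item revenue from a value distribution `G` on `[0,∞)`. -/
def Rev1 (G : Measure ℝ≥0) : ℝ≥0∞ := Rev (G.map toOne)

/-- `EU n H`: the set of buyer types with at most one coordinate strictly greater than `H`. -/
def EU (n : ℕ) (H : ℝ) : Set (BuyerType n) :=
  {v | {i : Fin n | H < (v i : ℝ)}.Subsingleton}

/-- A menu is `E`-exclusive if every entry priced above `E` allocates at most one item with
positive probability. -/
def Exclusive {n : ℕ} (E : ℝ) (M : Set (Outcome n)) : Prop :=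
  ∀ e ∈ M, E < e.2 → {i : Fin n | 0 < e.1 i}.Subsingleton


/-- The fair-coin value distribution on `[0,∞)`: value `0` or `1`, each with probability `1/2`. -/
def coin : Measure ℝ≥0 := (2 : ℝ≥0∞)⁻¹ • Measure.dirac 0 + (2 : ℝ≥0∞)⁻¹ • Measure.dirac 1

attribute [local instance] Classical.propDecidable

/-- Embed a boolean vector as a buyer type. -/
def bvec {n : ℕ} (w : Fin n → Bool) : BuyerType n := fun i => if w i then 1 else 0

instance : IsProbabilityMeasure coin := by
  constructor
  rw [coin, Measure.add_apply, Measure.smul_apply, Measure.smul_apply]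
  simp [Measure.dirac_apply]
  rw [ENNReal.inv_two_add_inv_two]

lemma coinPi_eq (n : ℕ) :
    (Measure.pi fun _ : Fin n => coin) =
      ((2 : ℝ≥0∞) ^ n)⁻¹ • ∑ w : Fin n → Bool, Measure.dirac (bvec w) := by
  refine Measure.pi_eq fun s hs => ?_
  rw [Measure.smul_apply, Measure.finset_sum_apply]
  have h1 : ∀ w : Fin n → Bool, (Measure.dirac (bvec w)) (Set.univ.pi s)
      = ∏ i, (if (bvec w i) ∈ s i then (1:ℝ≥0∞) else 0) := by
    intro w
    rw [Measure.dirac_apply' _ (MeasurableSet.univ_pi hs), Finset.prod_boole]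
    simp [Set.indicator_apply, Set.mem_univ_pi]
  simp_rw [h1]
  have h2 : ∑ w : Fin n → Bool, ∏ i, (if (bvec w i) ∈ s i then (1:ℝ≥0∞) else 0)
      = ∏ i : Fin n, ∑ b : Bool, (if ((if b then (1:ℝ≥0) else 0)) ∈ s i then (1:ℝ≥0∞) else 0) := by
    rw [← Finset.sum_prod_piFinset (Finset.univ : Finset Bool)
      (fun i b => if ((if b then (1:ℝ≥0) else 0)) ∈ s i then (1:ℝ≥0∞) else 0)]
    rw [Fintype.piFinset_univ]
    rfl
  rw [h2]
  have h3 : ∀ i, coin (s i) = (2 : ℝ≥0∞)⁻¹ *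
      ∑ b : Bool, (if ((if b then (1:ℝ≥0) else 0)) ∈ s i then (1:ℝ≥0∞) else 0) := by
    intro i
    rw [coin, Measure.add_apply, Measure.smul_apply, Measure.smul_apply,
      Measure.dirac_apply' _ (hs i), Measure.dirac_apply' _ (hs i), Fintype.sum_bool]
    simp only [Set.indicator_apply, Pi.one_apply, if_true, smul_eq_mul]
    split_ifs <;> simp_all <;> ring
  rw [smul_eq_mul]
  symm
  calc ∏ i, coin (s i)
      = ∏ i : Fin n, ((2 : ℝ≥0∞)⁻¹ *
        ∑ b : Bool, (if ((if b then (1:ℝ≥0) else 0)) ∈ s i then (1:ℝ≥0∞) else 0)) := by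
        exact Finset.prod_congr rfl fun i _ => h3 i
    _ = ((2 : ℝ≥0∞) ^ n)⁻¹ *
        ∏ i : Fin n, ∑ b : Bool, (if ((if b then (1:ℝ≥0) else 0)) ∈ s i then (1:ℝ≥0∞) else 0) := by
        rw [Finset.prod_mul_distrib, Finset.prod_const, ENNReal.inv_pow]
        simp


/-- The item-pricing entry for a set `S`: allocate exactly the items of `S`, price `|S|`. -/
def entS {n : ℕ} (S : Finset (Fin n)) : Outcome n :=
  ((fun i => if i ∈ S then (1:ℝ) else 0), (S.card : ℝ))

def ipMenu (n : ℕ) : Set (Outcome n) := Set.range (fun S : Finset (Fin n) => entS S)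

def ipSet {n : ℕ} (v : BuyerType n) : Finset (Fin n) :=
  Finset.univ.filter (fun i => 1 ≤ v i)

def ipChoice {n : ℕ} (v : BuyerType n) : Outcome n := entS (ipSet v)

lemma utility_entS {n : ℕ} (S : Finset (Fin n)) (v : BuyerType n) :
    utility (entS S) v = ∑ i ∈ S, ((v i : ℝ) - 1) := by
  unfold utility entS
  rw [Finset.sum_sub_distrib]
  congr 1
  · simp [Finset.sum_ite_mem, Finset.univ_inter, ite_mul]
  · simp

lemma ipMenu_IR (n : ℕ) : IRMenu (ipMenu n) := by
  constructor
  · rintro e ⟨S, rfl⟩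
    refine ⟨fun i => ?_, Nat.cast_nonneg _⟩
    by_cases h : i ∈ S <;> simp [entS, h]
  · refine ⟨∅, ?_⟩
    unfold entS zeroEntry
    simp

lemma utility_ip_le {n : ℕ} (S : Finset (Fin n)) (v : BuyerType n) :
    utility (entS S) v ≤ utility (ipChoice v) v := by
  rw [ipChoice, utility_entS, utility_entS]
  have h1 : ∑ i ∈ S, ((v i : ℝ) - 1) ≤ ∑ i ∈ S.filter (fun i => 1 ≤ v i), ((v i : ℝ) - 1) := by
    rw [← Finset.sum_filter_add_sum_filter_not S (fun i => 1 ≤ v i)]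
    have : ∑ i ∈ S.filter (fun i => ¬ 1 ≤ v i), ((v i : ℝ) - 1) ≤ 0 := by
      apply Finset.sum_nonpos
      intro i hi
      have := (Finset.mem_filter.1 hi).2
      have h2 : (v i : ℝ) < 1 := by
        have := lt_of_not_ge this
        exact_mod_cast this
      linarith
    linarith
  refine h1.trans ?_
  apply Finset.sum_le_sum_of_subset_of_nonneg
  · intro i hi
    simp only [ipSet, Finset.mem_filter, Finset.mem_univ, true_and]
    exact (Finset.mem_filter.1 hi).2
  · intro i hi _
    simp only [ipSet, Finset.mem_filter, Finset.mem_univ, true_and] at hi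
    have : (1:ℝ) ≤ (v i : ℝ) := by exact_mod_cast hi
    linarith

lemma ip_tie {n : ℕ} (S : Finset (Fin n)) (v : BuyerType n)
    (h : utility (entS S) v = utility (ipChoice v) v) :
    (entS S).2 ≤ (ipChoice v).2 := by
  have hsub : S ⊆ ipSet v := by
    by_contra hc
    obtain ⟨i, hiS, hiI⟩ := Finset.not_subset.1 hc
    have hvi : (v i : ℝ) < 1 := by
      simp only [ipSet, Finset.mem_filter, Finset.mem_univ, true_and] at hiI
      exact_mod_cast lt_of_not_ge hiI
    -- utility of S is at most utility of S.erase i which is ≤ max; but S loses a negative term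
    have h1 : utility (entS S) v = utility (entS (S.erase i)) v + ((v i : ℝ) - 1) := by
      rw [utility_entS, utility_entS, Finset.sum_erase_add S _ hiS]
    have h2 : utility (entS (S.erase i)) v ≤ utility (ipChoice v) v := utility_ip_le _ v
    rw [h] at h1
    linarith
  show (S.card : ℝ) ≤ ((ipSet v).card : ℝ)
  exact_mod_cast Finset.card_le_card hsub

lemma ip_price_measurable (n : ℕ) : Measurable fun v : BuyerType n => (ipChoice v).2 := by
  have : (fun v : BuyerType n => (ipChoice v).2)
      = fun v => ∑ i : Fin n, (if 1 ≤ v i then (1:ℝ) else 0) := by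
    funext v
    show ((ipSet v).card : ℝ) = _
    rw [ipSet, Finset.sum_boole]
  rw [this]
  apply Finset.measurable_sum
  intro i _
  have hset : MeasurableSet {v : BuyerType n | 1 ≤ v i} :=
    measurableSet_le measurable_const (measurable_pi_apply i)
  exact Measurable.ite hset measurable_const measurable_const

lemma ipChoice_isChoice (n : ℕ) : IsChoice (ipMenu n) (fun v => ipChoice v) := by
  refine ⟨fun v => ⟨ipSet v, rfl⟩, ?_, ?_, ip_price_measurable n⟩
  · rintro v e ⟨S, rfl⟩
    exact utility_ip_le S v
  · rintro v e ⟨S, rfl⟩ h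
    exact ip_tie S v h

lemma lintegral_coinPi (n : ℕ) (f : BuyerType n → ℝ≥0∞) :
    ∫⁻ v, f v ∂(Measure.pi fun _ : Fin n => coin)
      = ((2 : ℝ≥0∞) ^ n)⁻¹ * ∑ w : Fin n → Bool, f (bvec w) := by
  rw [coinPi_eq n, lintegral_smul_measure, lintegral_finset_sum_measure]
  congr 1
  exact Finset.sum_congr rfl fun w _ => lintegral_dirac _ f

lemma sum_wt (n : ℕ) :
    ∑ w : Fin n → Bool, (Finset.univ.filter (fun i => w i = true)).card = n * 2 ^ (n - 1) := by
  have h1 : ∀ w : Fin n → Bool, (Finset.univ.filter (fun i => w i = true)).card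
      = ∑ i : Fin n, (if w i = true then 1 else 0) := by
    intro w
    rw [Finset.sum_boole]
    simp
  simp_rw [h1]
  rw [Finset.sum_comm]
  have h2 : ∀ i : Fin n, ∑ w : Fin n → Bool, (if w i = true then (1:ℕ) else 0) = 2 ^ (n-1) := by
    intro i
    rcases n with - | k
    · exact absurd i.2 (by omega)
    obtain ⟨c, hc⟩ : ∃ c, ∑ w : Fin (k+1) → Bool, (if w i = true then (1:ℕ) else 0) = c := ⟨_, rfl⟩
    rw [hc]
    have inv : Function.Involutive (fun w : Fin (k+1) → Bool => Function.update w i (!(w i))) := by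
      intro w
      funext j
      rcases eq_or_ne j i with rfl | hji
      · simp
      · simp [Function.update_apply, hji]
    have h3 : c = ∑ w : Fin (k+1) → Bool, (if w i = false then (1:ℕ) else 0) := by
      rw [← hc]
      apply Fintype.sum_equiv (Function.Involutive.toPerm _ inv)
      intro w
      have hpe : (Function.Involutive.toPerm _ inv) w = Function.update w i (!(w i)) := rfl
      rw [hpe]
      rcases hw : w i <;> simp [hw]
    have h4 : c + c = 2 ^ (k+1) := by
      nth_rewrite 2 [h3]
      rw [← hc]
      rw [← Finset.sum_add_distrib]
      calc ∑ w : Fin (k+1) → Bool, ((if w i = true then (1:ℕ) else 0) + if w i = false then 1 else 0)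
          = ∑ _w : Fin (k+1) → Bool, 1 :=
            Finset.sum_congr rfl fun w _ => by rcases hw : w i <;> simp [hw]
        _ = 2 ^ (k+1) := by simp [Finset.card_univ, Fintype.card_fun]
    have h5 : (2:ℕ) ^ (k + 1) = 2 ^ k + 2 ^ k := by ring
    rw [h5] at h4
    clear h3 hc h1 inv
    have hk : k + 1 - 1 = k := rfl
    rw [hk]
    generalize (2:ℕ) ^ k = a at h4 ⊢
    omega
  simp_rw [h2]
  simp [mul_comm]

lemma ip_revenue (n : ℕ) (hn : 1 ≤ n) :
    revenue (fun v => ipChoice v) (Measure.pi fun _ : Fin n => coin)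
      = ENNReal.ofReal ((n:ℝ)/2) := by
  rw [revenue, lintegral_coinPi]
  have hset : ∀ w : Fin n → Bool, ipSet (bvec w) = Finset.univ.filter (fun i => w i = true) := by
    intro w
    apply Finset.filter_congr
    intro i _
    rcases hw : w i <;> simp [bvec, hw]
  have hterm : ∀ w : Fin n → Bool, ENNReal.ofReal ((ipChoice (bvec w)).2)
      = (((Finset.univ.filter (fun i => w i = true)).card : ℕ) : ℝ≥0∞) := by
    intro w
    show ENNReal.ofReal ((ipSet (bvec w)).card : ℝ) = _
    rw [hset w, ENNReal.ofReal_natCast]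
  simp_rw [hterm]
  rw [← Nat.cast_sum, sum_wt n]
  have h2n : (2:ℝ≥0∞)^n = 2 * 2^(n-1) := by
    conv_lhs => rw [show n = 1 + (n-1) by omega]
    rw [pow_add, pow_one]
  rw [h2n]
  rw [ENNReal.mul_inv (Or.inl two_ne_zero) (Or.inl ENNReal.ofNat_ne_top)]
  have hcast : ((n * 2^(n-1) : ℕ) : ℝ≥0∞) = (n : ℝ≥0∞) * 2^(n-1) := by push_cast; ring
  rw [hcast]
  have : 2⁻¹ * (2^(n-1) : ℝ≥0∞)⁻¹ * ((n:ℝ≥0∞) * 2^(n-1))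
      = 2⁻¹ * (n:ℝ≥0∞) * ((2^(n-1) : ℝ≥0∞)⁻¹ * 2^(n-1)) := by ring
  rw [this, ENNReal.inv_mul_cancel (by positivity) (by simp [ENNReal.pow_ne_top]), mul_one]
  rw [ENNReal.ofReal_div_of_pos (by norm_num), ENNReal.ofReal_natCast, ENNReal.ofReal_ofNat]
  rw [ENNReal.div_eq_inv_mul]

lemma sq_le_two_pow : ∀ k : ℕ, 4 ≤ k → k * k ≤ 2 ^ k := by
  intro k hk
  induction k, hk using Nat.le_induction with
  | base => norm_num
  | succ k hk ih =>
    have h1 : (k+1) * (k+1) = k * k + (2*k + 1) := by ring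
    have h2 : 2*k + 1 ≤ k * k := by nlinarith
    have h3 : (2:ℕ)^(k+1) = 2^k + 2^k := by ring
    omega

lemma choose_mono_le_half (n j m : ℕ) (hjm : j ≤ m) (hm : m ≤ n / 2) :
    n.choose j ≤ n.choose m := by
  revert hm
  induction m, hjm using Nat.le_induction with
  | base => exact fun _ => le_rfl
  | succ m hm' ih =>
    intro hm
    exact (ih (by omega)).trans (Nat.choose_le_succ_of_lt_half_left (by omega))

lemma choose_mul_pow_le (n m : ℕ) (hm : m ≤ n) : n.choose m * 7 ^ (n - m) ≤ 8 ^ n := by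
  have h8 : (8:ℕ) ^ n = (1 + 7) ^ n := by norm_num
  rw [h8, add_pow]
  have hmem : m ∈ Finset.range (n+1) := Finset.mem_range.2 (by omega)
  have := Finset.single_le_sum
    (f := fun k => (1:ℕ)^k * 7^(n-k) * n.choose k)
    (fun k _ => Nat.zero_le _) hmem
  simpa [mul_comm] using this

lemma floor_two_rpow_le (n : ℕ) :
    ⌊(2:ℝ) ^ ((n:ℝ)/10)⌋₊ ≤ 2 ^ (n/10 + 1) := by
  have h1 : (2:ℝ) ^ ((n:ℝ)/10) ≤ (2:ℝ) ^ (((n/10 + 1 : ℕ)):ℝ) := by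
    apply Real.rpow_le_rpow_of_exponent_le (by norm_num)
    have hnat : n ≤ 10 * (n/10) + 10 := by omega
    have hreal : (n:ℝ) ≤ 10 * ((n/10 : ℕ) : ℝ) + 10 := by exact_mod_cast hnat
    push_cast
    linarith
  have h2 : (2:ℝ) ^ (((n/10 + 1 : ℕ)):ℝ) = ((2 ^ (n/10 + 1) : ℕ) : ℝ) := by
    rw [Real.rpow_natCast]
    push_cast
    ring
  calc ⌊(2:ℝ) ^ ((n:ℝ)/10)⌋₊ ≤ ⌊((2 ^ (n/10 + 1) : ℕ) : ℝ)⌋₊ :=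
        Nat.floor_mono (h1.trans_eq h2)
    _ = 2 ^ (n/10 + 1) := Nat.floor_natCast _

lemma numeric_main (n : ℕ) (hn : 20000 ≤ n) :
    20 * (⌊(2:ℝ) ^ ((n:ℝ)/10)⌋₊ + 1) * (∑ j ∈ Finset.range (n/8 + 1), n.choose j) ≤ 2 ^ n := by
  set K := ⌊(2:ℝ) ^ ((n:ℝ)/10)⌋₊ with hK
  set m := n / 8 + 1 with hm
  set b := n / 10 with hb
  set c := n / 40 with hc
  set q := (n - m) / 8 with hq
  have hmn2 : m ≤ n / 2 := by omega
  have hmn : m ≤ n := by omega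
  have hS : (∑ j ∈ Finset.range m, n.choose j) ≤ m * n.choose m := by
    calc (∑ j ∈ Finset.range m, n.choose j) ≤ ∑ _j ∈ Finset.range m, n.choose m :=
          Finset.sum_le_sum fun j hj => choose_mono_le_half n j m (by
            have := Finset.mem_range.1 hj; omega) hmn2
      _ = m * n.choose m := by rw [Finset.sum_const, Finset.card_range, smul_eq_mul]
  have hK1 : K + 1 ≤ 2 ^ (b + 2) := by
    have h0 : K ≤ 2^(b+1) := by rw [hK, hb]; exact floor_two_rpow_le n
    have h2 : (2:ℕ) ^ (b+2) = 2^(b+1) + 2^(b+1) := by ring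
    have h3 : 1 ≤ 2^(b+1) := Nat.one_le_two_pow
    omega
  -- the key exponent inequality
  have hqb : 8 * q ≤ n - m := by omega
  have hexp : b + c + 3 * n ≤ n + 22 * q := by omega
  have h80m : 80 * m ≤ 2 ^ c := by
    have hc4 : 4 ≤ c := by omega
    have hcc : c * c ≤ 2 ^ c := sq_le_two_pow c hc4
    have h1 : 80 * m ≤ 10 * n + 80 := by omega
    have h2 : 500 ≤ c := by omega
    have h3 : 500 * c ≤ c * c := Nat.mul_le_mul_right c h2
    have h4 : 10 * n + 80 ≤ 500 * c := by omega
    omega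
  have h7 : 0 < 7^(n-m) := Nat.pow_pos (by norm_num)
  have hchoose := choose_mul_pow_le n m hmn
  refine Nat.le_of_mul_le_mul_right ?_ h7
  calc 20 * (K+1) * (∑ j ∈ Finset.range m, n.choose j) * 7^(n-m)
      ≤ 20 * 2^(b+2) * (m * n.choose m) * 7^(n-m) := by
        apply Nat.mul_le_mul_right
        exact Nat.mul_le_mul (Nat.mul_le_mul_left 20 hK1) hS
    _ = (80 * m) * 2^b * (n.choose m * 7^(n-m)) := by ring
    _ ≤ 2^c * 2^b * 8^n := by
        apply Nat.mul_le_mul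
        apply Nat.mul_le_mul_right
        exact h80m
        exact hchoose
    _ = 2^(c + b + 3*n) := by
        rw [pow_add, pow_add, show (8:ℕ) = 2^3 by norm_num, ← pow_mul]
    _ ≤ 2^(n + 22*q) := Nat.pow_le_pow_right (by norm_num) (by omega)
    _ = 2^n * (2^22)^q := by rw [pow_add, ← pow_mul]
    _ ≤ 2^n * (7^8)^q := by
        apply Nat.mul_le_mul_left
        apply Nat.pow_le_pow_left
        norm_num
    _ = 2^n * 7^(8*q) := by rw [← pow_mul]
    _ ≤ 2^n * 7^(n-m) := Nat.mul_le_mul_left _ (Nat.pow_le_pow_right (by norm_num) hqb)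

lemma sum_x_update {n : ℕ} (x : Fin n → ℝ) (w : Fin n → Bool) (i : Fin n) (hwi : w i = false) :
    ∑ j, x j * (bvec (Function.update w i true) j : ℝ)
      = (∑ j, x j * (bvec w j : ℝ)) + x i := by
  have hb : ∀ j, (bvec (Function.update w i true) j : ℝ)
      = (bvec w j : ℝ) + (if j = i then 1 else 0) := by
    intro j
    rcases eq_or_ne j i with rfl | hji
    · simp [bvec, hwi]
    · simp [bvec, Function.update_of_ne hji, hji]
  simp_rw [hb, mul_add]
  rw [Finset.sum_add_distrib]
  congr 1
  simp

/-- support of w as a finset -/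
def suppF {n : ℕ} (w : Fin n → Bool) : Finset (Fin n) :=
  Finset.univ.filter (fun i => w i = true)

lemma sum_x_bvec {n : ℕ} (x : Fin n → ℝ) (w : Fin n → Bool) :
    ∑ j, x j * (bvec w j : ℝ) = ∑ j ∈ suppF w, x j := by
  rw [suppF, Finset.sum_filter]
  apply Finset.sum_congr rfl
  intro j _
  rcases hw : w j <;> simp [bvec, hw]

lemma key_sum (n : ℕ) (hn : 20000 ≤ n) (M : Set (Outcome n)) (t : BuyerType n → Outcome n)
    (hM : IRMenu M) (ht : IsChoice M t)
    (hsize : (M \ {zeroEntry n}).encard ≤ ((⌊(2:ℝ) ^ ((n:ℝ)/10)⌋₊ : ℕ) : ℕ∞)) :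
    ∑ w : Fin n → Bool, (t (bvec w)).2
      < 2^n * ((1 - 1/(10*(n:ℝ))) * ((n:ℝ)/2)) := by
  set K := ⌊(2:ℝ) ^ ((n:ℝ)/10)⌋₊ with hK
  set m := n / 8 + 1 with hm
  -- menu is finite with at most K+1 entries
  have hfin1 : (M \ {zeroEntry n}).Finite := by
    rw [← Set.encard_ne_top_iff]
    intro htp
    rw [htp] at hsize
    exact (by simp : ¬ (⊤ : ℕ∞) ≤ ((K:ℕ) : ℕ∞)) hsize
  have hfinM : M.Finite := by
    have hsub : M ⊆ insert (zeroEntry n) (M \ {zeroEntry n}) := by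
      intro e he
      by_cases hz : e = zeroEntry n <;> simp [hz, he]
    exact (hfin1.insert _).subset hsub
  have hFMcard : hfinM.toFinset.card ≤ K + 1 := by
    have h1 : M.encard ≤ (K : ℕ∞) + 1 := by
      have hsub : M ⊆ insert (zeroEntry n) (M \ {zeroEntry n}) := by
        intro e he
        by_cases hz : e = zeroEntry n <;> simp [hz, he]
      calc M.encard ≤ (insert (zeroEntry n) (M \ {zeroEntry n})).encard :=
            Set.encard_le_encard hsub
        _ ≤ (M \ {zeroEntry n}).encard + 1 := Set.encard_insert_le _ _
        _ ≤ (K : ℕ∞) + 1 := by exact add_le_add_left hsize 1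
    rw [hfinM.encard_eq_coe_toFinset_card] at h1
    exact_mod_cast h1
  -- basic facts
  have hval : ∀ v, ValidOutcome (t v) := fun v => hM.1 _ (ht.1 v)
  have hUnn : ∀ v, 0 ≤ utility (t v) v := by
    intro v
    have h0 : utility (zeroEntry n) v = 0 := by simp [utility, zeroEntry]
    have := ht.2.1 v _ hM.2
    linarith
  -- deficit formula and positivity of g
  have hgU : ∀ w : Fin n → Bool,
      utility (t (bvec w)) (bvec w) ≤ ((suppF w).card : ℝ) - (t (bvec w)).2 := by
    intro w
    have hle : ∑ j, (t (bvec w)).1 j * (bvec w j : ℝ) ≤ ((suppF w).card : ℝ) := by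
      rw [sum_x_bvec]
      calc ∑ j ∈ suppF w, (t (bvec w)).1 j ≤ ∑ _j ∈ suppF w, (1:ℝ) :=
            Finset.sum_le_sum fun j _ => ((hval (bvec w)).1 j).2
        _ = ((suppF w).card : ℝ) := by simp
    have : utility (t (bvec w)) (bvec w)
        = (∑ j, (t (bvec w)).1 j * (bvec w j : ℝ)) - (t (bvec w)).2 := rfl
    linarith
  have hgnn : ∀ w : Fin n → Bool, 0 ≤ ((suppF w).card : ℝ) - (t (bvec w)).2 :=
    fun w => le_trans (hUnn (bvec w)) (hgU w)
  -- Bad and Good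
  set Bad : Finset (Fin n → Bool) :=
    Finset.univ.filter (fun w => (1:ℝ)/2 ≤ ((suppF w).card : ℝ) - (t (bvec w)).2) with hBad
  set Good : Finset (Fin n → Bool) :=
    Finset.univ.filter (fun w => ¬ ((1:ℝ)/2 ≤ ((suppF w).card : ℝ) - (t (bvec w)).2)) with hGood
  set A : (Fin n → Bool) → Finset (Fin n) :=
    (fun w => Finset.univ.filter (fun i => (1:ℝ)/2 < (t (bvec w)).1 i)) with hA
  -- On the good set, the allocation is > 1/2 on the support
  have hG1 : ∀ w ∈ Good, ∀ i, w i = true → (1:ℝ)/2 < (t (bvec w)).1 i := by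
    intro w hw i hwi
    have hg : ((suppF w).card : ℝ) - (t (bvec w)).2 < 1/2 := by
      have := (Finset.mem_filter.1 hw).2
      linarith [not_le.1 this]
    have hdef : ((suppF w).card : ℝ) - (∑ j, (t (bvec w)).1 j * (bvec w j : ℝ))
        = ∑ j ∈ suppF w, (1 - (t (bvec w)).1 j) := by
      rw [Finset.sum_sub_distrib, sum_x_bvec]
      simp
    have hmemw : i ∈ suppF w := by simp [suppF, hwi]
    have hsingle : 1 - (t (bvec w)).1 i ≤ ∑ j ∈ suppF w, (1 - (t (bvec w)).1 j) :=
      Finset.single_le_sum (f := fun j => 1 - (t (bvec w)).1 j)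
        (fun j _ => by
          show (0:ℝ) ≤ 1 - (t (bvec w)).1 j
          linarith [((hval (bvec w)).1 j).2]) hmemw
    have hU := hUnn (bvec w)
    have hutil : utility (t (bvec w)) (bvec w)
        = (∑ j, (t (bvec w)).1 j * (bvec w j : ℝ)) - (t (bvec w)).2 := rfl
    -- deficit ≤ g < 1/2
    have : ∑ j ∈ suppF w, (1 - (t (bvec w)).1 j) < 1/2 := by
      rw [← hdef]
      linarith
    linarith
  -- flipping a high coordinate of a good type gives a bad type
  have hG2 : ∀ w ∈ Good, ∀ i, w i = false → (1:ℝ)/2 < (t (bvec w)).1 i →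
      Function.update w i true ∈ Bad := by
    intro w _ i hwi hxi
    set w' := Function.update w i true with hw'
    have hup : utility (t (bvec w)) (bvec w')
        = utility (t (bvec w)) (bvec w) + (t (bvec w)).1 i := by
      show (∑ j, (t (bvec w)).1 j * (bvec w' j : ℝ)) - (t (bvec w)).2 = _
      rw [hw', sum_x_update _ w i hwi]
      unfold utility
      ring
    have hopt : utility (t (bvec w)) (bvec w') ≤ utility (t (bvec w')) (bvec w') :=
      ht.2.1 (bvec w') _ (ht.1 (bvec w))
    have hUw := hUnn (bvec w)
    have hg' := hgU w'
    refine Finset.mem_filter.2 ⟨Finset.mem_univ _, ?_⟩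
    calc (1:ℝ)/2 ≤ utility (t (bvec w)) (bvec w) + (t (bvec w)).1 i := by linarith
      _ = utility (t (bvec w)) (bvec w') := hup.symm
      _ ≤ utility (t (bvec w')) (bvec w') := hopt
      _ ≤ ((suppF w').card : ℝ) - (t (bvec w')).2 := hg'
  classical
  set cw : (Fin n → Bool) → ℕ := fun w => ((A w) \ (suppF w)).card with hcw
  have count1 : ∑ w ∈ Good, cw w ≤ Bad.card * n := by
    have hTcard : (Good.sigma (fun w => (A w) \ (suppF w))).card = ∑ w ∈ Good, cw w :=
      Finset.card_sigma _ _
    rw [← hTcard]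
    have hmaps : ∀ q ∈ Good.sigma (fun w => (A w) \ (suppF w)),
        (Function.update q.1 q.2 true, q.2) ∈ Bad ×ˢ Finset.univ := by
      rintro ⟨w, i⟩ hq
      rw [Finset.mem_sigma] at hq
      obtain ⟨hwG, hi⟩ := hq
      rw [Finset.mem_sdiff] at hi
      have hxi : (1:ℝ)/2 < (t (bvec w)).1 i := by
        have := hi.1
        rw [hA] at this
        simpa using (Finset.mem_filter.1 this).2
      have hwi : w i = false := by
        have := hi.2
        simp only [suppF, Finset.mem_filter, Finset.mem_univ, true_and] at this
        simpa using this
      exact Finset.mem_product.2 ⟨hG2 w hwG i hwi hxi, Finset.mem_univ _⟩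
    have hinj : Set.InjOn (fun q : (Σ _ : Fin n → Bool, Fin n) =>
        (Function.update q.1 q.2 true, q.2)) ↑(Good.sigma (fun w => (A w) \ (suppF w))) := by
      rintro ⟨w, i⟩ h1 ⟨w', i'⟩ h2 heq
      simp only [Prod.mk.injEq] at heq
      obtain ⟨hupd, rfl⟩ := heq
      have hwmem := Finset.mem_coe.1 h1
      have hwmem' := Finset.mem_coe.1 h2
      rw [Finset.mem_sigma] at hwmem hwmem'
      have hwi : w i = false := by
        have := (Finset.mem_sdiff.1 hwmem.2).2
        simp only [suppF, Finset.mem_filter, Finset.mem_univ, true_and] at this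
        simpa using this
      have hwi' : w' i = false := by
        have := (Finset.mem_sdiff.1 hwmem'.2).2
        simp only [suppF, Finset.mem_filter, Finset.mem_univ, true_and] at this
        simpa using this
      have hww : w = w' := by
        funext j
        rcases eq_or_ne j i with rfl | hji
        · rw [hwi, hwi']
        · have := congrFun hupd j
          rwa [Function.update_of_ne hji, Function.update_of_ne hji] at this
      subst hww
      rfl
    calc (Good.sigma (fun w => (A w) \ (suppF w))).card
        ≤ (Bad ×ˢ (Finset.univ : Finset (Fin n))).card :=
          Finset.card_le_card_of_injOn _ hmaps hinj
      _ = Bad.card * n := by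
          rw [Finset.card_product, Finset.card_univ, Fintype.card_fin]
  have hn8m : n ≤ 8 * m := by omega
  have hmpos : 0 < m := by omega
  have hGB : (Good.filter (fun w => ¬ (cw w < m))).card ≤ 8 * Bad.card := by
    have h1 : (Good.filter (fun w => ¬ (cw w < m))).card * m ≤ ∑ w ∈ Good, cw w := by
      calc (Good.filter (fun w => ¬ (cw w < m))).card * m
          = ∑ _w ∈ Good.filter (fun w => ¬ (cw w < m)), m := by
            rw [Finset.sum_const, smul_eq_mul]
        _ ≤ ∑ w ∈ Good.filter (fun w => ¬ (cw w < m)), cw w :=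
            Finset.sum_le_sum fun w hw => not_lt.1 (Finset.mem_filter.1 hw).2
        _ ≤ ∑ w ∈ Good, cw w :=
            Finset.sum_le_sum_of_subset (Finset.filter_subset _ _)
    have h2 : (Good.filter (fun w => ¬ (cw w < m))).card * m ≤ (8 * Bad.card) * m := by
      calc (Good.filter (fun w => ¬ (cw w < m))).card * m ≤ Bad.card * n := h1.trans count1
        _ ≤ Bad.card * (8 * m) := Nat.mul_le_mul_left _ hn8m
        _ = (8 * Bad.card) * m := by ring
    exact Nat.le_of_mul_le_mul_right h2 hmpos
  -- small-c good types are few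
  set BS : Finset (Finset (Fin n)) :=
    (Finset.univ : Finset (Fin n)).powerset.filter (fun s => s.card < m) with hBS
  have count2 : (Good.filter (fun w => cw w < m)).card ≤ hfinM.toFinset.card * BS.card := by
    have hmaps : ∀ w ∈ Good.filter (fun w => cw w < m),
        (t (bvec w), (A w) \ (suppF w)) ∈ hfinM.toFinset ×ˢ BS := by
      intro w hw
      refine Finset.mem_product.2 ⟨?_, ?_⟩
      · exact hfinM.mem_toFinset.2 (ht.1 (bvec w))
      · rw [hBS]
        refine Finset.mem_filter.2 ⟨Finset.mem_powerset.2 (Finset.subset_univ _), ?_⟩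
        exact (Finset.mem_filter.1 hw).2
    have hinj : Set.InjOn (fun w => (t (bvec w), (A w) \ (suppF w)))
        ↑(Good.filter (fun w => cw w < m)) := by
      intro w h1 w' h2 heq
      simp only [Prod.mk.injEq] at heq
      obtain ⟨hts, hsd⟩ := heq
      have hG : w ∈ Good := Finset.mem_of_mem_filter _ (Finset.mem_coe.1 h1)
      have hG' : w' ∈ Good := Finset.mem_of_mem_filter _ (Finset.mem_coe.1 h2)
      have hAA : A w = A w' := by
        rw [hA]
        simp only
        apply Finset.filter_congr
        intro i _
        rw [hts]
      -- both supports are read off from the data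
      have hdir : ∀ (u u' : Fin n → Bool), u ∈ Good → u' ∈ Good → A u = A u' →
          (A u) \ (suppF u) = (A u') \ (suppF u') → ∀ j, u j = true → u' j = true := by
        intro u u' hu hu' hauu hsduu j huj
        by_contra huj'
        have huj'' : u' j = false := by
          rcases h : u' j
          · rfl
          · exact absurd h huj'
        have hjA : j ∈ A u := by
          rw [hA]
          simp only [Finset.mem_filter, Finset.mem_univ, true_and]
          exact hG1 u hu j huj
        have hjS' : j ∉ suppF u' := by
          simp [suppF, huj'']
        have : j ∈ (A u') \ (suppF u') := Finset.mem_sdiff.2 ⟨hauu ▸ hjA, hjS'⟩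
        rw [← hsduu] at this
        have : j ∉ suppF u := (Finset.mem_sdiff.1 this).2
        exact this (by simp [suppF, huj])
      funext j
      rcases hj : w j
      · rcases hj' : w' j
        · rfl
        · exact absurd (hdir w' w hG' hG hAA.symm hsd.symm j hj') (by simp [hj])
      · exact (hdir w w' hG hG' hAA hsd j hj).symm
    calc (Good.filter (fun w => cw w < m)).card
        ≤ (hfinM.toFinset ×ˢ BS).card := Finset.card_le_card_of_injOn _ hmaps hinj
      _ = hfinM.toFinset.card * BS.card := Finset.card_product _ _
  have count3 : BS.card ≤ ∑ j ∈ Finset.range m, n.choose j := by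
    have hsub : BS ⊆ (Finset.range m).biUnion
        (fun j => Finset.powersetCard j (Finset.univ : Finset (Fin n))) := by
      intro s hs
      rw [hBS] at hs
      have hcard := (Finset.mem_filter.1 hs).2
      refine Finset.mem_biUnion.2 ⟨s.card, Finset.mem_range.2 hcard, ?_⟩
      exact Finset.mem_powersetCard.2 ⟨Finset.subset_univ _, rfl⟩
    calc BS.card ≤ ((Finset.range m).biUnion
          (fun j => Finset.powersetCard j (Finset.univ : Finset (Fin n)))).card :=
          Finset.card_le_card hsub
      _ ≤ ∑ j ∈ Finset.range m, (Finset.powersetCard j (Finset.univ : Finset (Fin n))).card :=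
          Finset.card_biUnion_le
      _ = ∑ j ∈ Finset.range m, n.choose j := by
          apply Finset.sum_congr rfl
          intro j _
          rw [Finset.card_powersetCard, Finset.card_univ, Fintype.card_fin]
  -- cardinality bookkeeping
  have hcards : Bad.card + Good.card = 2^n := by
    rw [hBad, hGood, Finset.card_filter_add_card_filter_not]
    simp [Finset.card_univ, Fintype.card_fun]
  have hGsplit : (Good.filter (fun w => cw w < m)).card
      + (Good.filter (fun w => ¬ (cw w < m))).card = Good.card :=
    Finset.card_filter_add_card_filter_not _
  have hnat : 2^n ≤ 9 * Bad.card + (K+1) * (∑ j ∈ Finset.range m, n.choose j) := by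
    have h1 : (Good.filter (fun w => cw w < m)).card
        ≤ (K+1) * (∑ j ∈ Finset.range m, n.choose j) :=
      count2.trans (Nat.mul_le_mul hFMcard count3)
    omega
  have hnum : 20 * (K+1) * (∑ j ∈ Finset.range m, n.choose j) ≤ 2^n := by
    rw [hK, hm]
    exact numeric_main n hn
  -- real arithmetic
  have hwtsum : ∑ w : Fin n → Bool, ((suppF w).card : ℝ) = ((n * 2^(n-1) : ℕ) : ℝ) := by
    rw [← Nat.cast_sum]
    congr 1
    exact sum_wt n
  have hsum1 : ∑ w : Fin n → Bool, (t (bvec w)).2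
      = ((n * 2^(n-1) : ℕ) : ℝ)
        - ∑ w : Fin n → Bool, (((suppF w).card : ℝ) - (t (bvec w)).2) := by
    rw [← hwtsum, ← Finset.sum_sub_distrib]
    apply Finset.sum_congr rfl
    intros
    ring
  have hgBad : (Bad.card : ℝ) * (1/2)
      ≤ ∑ w : Fin n → Bool, (((suppF w).card : ℝ) - (t (bvec w)).2) := by
    calc (Bad.card:ℝ) * (1/2) = ∑ _w ∈ Bad, (1/2 : ℝ) := by
          rw [Finset.sum_const, nsmul_eq_mul]
      _ ≤ ∑ w ∈ Bad, (((suppF w).card : ℝ) - (t (bvec w)).2) :=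
          Finset.sum_le_sum fun w hw => (Finset.mem_filter.1 hw).2
      _ ≤ ∑ w : Fin n → Bool, (((suppF w).card : ℝ) - (t (bvec w)).2) :=
          Finset.sum_le_sum_of_subset_of_nonneg (Finset.subset_univ _)
            (fun w _ _ => hgnn w)
  have hc1 : (2:ℝ)^n ≤ 9 * (Bad.card:ℝ)
      + (((K+1) * (∑ j ∈ Finset.range m, n.choose j) : ℕ) : ℝ) := by
    exact_mod_cast hnat
  have hc2 : 20 * (((K+1) * (∑ j ∈ Finset.range m, n.choose j) : ℕ) : ℝ) ≤ (2:ℝ)^n := by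
    have h := (Nat.cast_le (α := ℝ)).2 hnum
    push_cast at h ⊢
    linarith
  have hpow : (0:ℝ) < 2^n := by positivity
  have hN1 : ((n * 2^(n-1) : ℕ):ℝ) = (n:ℝ) * 2^(n-1) := by push_cast; ring
  have h2n : (2:ℝ)^n = 2 * 2^(n-1) := by
    conv_lhs => rw [show n = 1 + (n-1) by omega]
    rw [pow_add, pow_one]
  have hn0 : (0:ℝ) < n := by
    have : 0 < n := by omega
    exact_mod_cast this
  have hRHS : (2:ℝ)^n * ((1 - 1/(10*(n:ℝ))) * ((n:ℝ)/2))
      = (n:ℝ)*2^(n-1) - 2^n/20 := by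
    have hfact : (1 - 1/(10*(n:ℝ))) * ((n:ℝ)/2) = (n:ℝ)/2 - 1/20 := by
      field_simp
      ring
    rw [hfact, h2n]
    ring
  rw [hsum1, hRHS]
  linarith

lemma rev_lt (n : ℕ) (hn : 20000 ≤ n) (M : Set (Outcome n)) (t : BuyerType n → Outcome n)
    (hM : IRMenu M) (ht : IsChoice M t)
    (hsize : (M \ {zeroEntry n}).encard ≤ ((⌊(2:ℝ) ^ ((n:ℝ)/10)⌋₊ : ℕ) : ℕ∞)) :
    revenue t (Measure.pi fun _ : Fin n => coin)
      < ENNReal.ofReal ((1 - 1/(10*(n:ℝ))) * ((n:ℝ)/2)) := by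
  have hn0 : (0:ℝ) < n := by exact_mod_cast (by omega : 0 < n)
  have hbig : (20000:ℝ) ≤ (n:ℝ) := by exact_mod_cast hn
  have hXpos : 0 < (1 - 1/(10*(n:ℝ))) * ((n:ℝ)/2) := by
    have h1 : 1/(10*(n:ℝ)) < 1 := by
      rw [div_lt_one (by positivity)]
      linarith
    have h2 : (0:ℝ) < (n:ℝ)/2 := by positivity
    nlinarith
  have hppos : ∀ w : Fin n → Bool, 0 ≤ (t (bvec w)).2 :=
    fun w => (hM.1 _ (ht.1 (bvec w))).2
  rw [revenue, lintegral_coinPi]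
  have hsum : (∑ w : Fin n → Bool, ENNReal.ofReal ((t (bvec w)).2))
      = ENNReal.ofReal (∑ w : Fin n → Bool, (t (bvec w)).2) :=
    (ENNReal.ofReal_sum_of_nonneg fun w _ => hppos w).symm
  rw [hsum]
  have hlt := key_sum n hn M t hM ht hsize
  have h2pow : (0:ℝ) < 2^n := by positivity
  have hofs : ENNReal.ofReal (∑ w : Fin n → Bool, (t (bvec w)).2)
      < ENNReal.ofReal ((2:ℝ)^n * ((1 - 1/(10*(n:ℝ))) * ((n:ℝ)/2))) :=
    (ENNReal.ofReal_lt_ofReal_iff (by positivity)).2 hlt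
  have hmul : ENNReal.ofReal ((2:ℝ)^n * ((1 - 1/(10*(n:ℝ))) * ((n:ℝ)/2)))
      = (2:ℝ≥0∞)^n * ENNReal.ofReal ((1 - 1/(10*(n:ℝ))) * ((n:ℝ)/2)) := by
    rw [ENNReal.ofReal_mul (by positivity)]
    congr 1
    rw [ENNReal.ofReal_pow (by norm_num), ENNReal.ofReal_ofNat]
  have hne0 : ((2:ℝ≥0∞)^n)⁻¹ ≠ 0 := by
    simp [ENNReal.pow_ne_top]
  have hnetop : ((2:ℝ≥0∞)^n)⁻¹ ≠ ⊤ := by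
    simp [ENNReal.inv_ne_top]
  calc ((2:ℝ≥0∞)^n)⁻¹ * ENNReal.ofReal (∑ w : Fin n → Bool, (t (bvec w)).2)
      < ((2:ℝ≥0∞)^n)⁻¹ * ENNReal.ofReal ((2:ℝ)^n * ((1 - 1/(10*(n:ℝ))) * ((n:ℝ)/2))) := by
        exact (ENNReal.mul_lt_mul_iff_right hne0 hnetop).2 hofs
    _ = ENNReal.ofReal ((1 - 1/(10*(n:ℝ))) * ((n:ℝ)/2)) := by
        rw [hmul, ← mul_assoc, ENNReal.inv_mul_cancel (by positivity) (ENNReal.pow_ne_top (by norm_num)), one_mul]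


/-- For all large enough `n`, every IR menu of size at most `2^(n/10)` obtains
revenue strictly less than `(1 - 1/(10n))·(n/2)` from the i.i.d. fair-coin distribution on
`n` items; consequently `Rev_C ≤ (1 - 1/(10n))·Rev` for `C = ⌊2^(n/10)⌋`. -/
theorem exponential_menu_size_lower_bound :
    ∃ n₀ : ℕ, ∀ n : ℕ, n₀ ≤ n →
      (∀ (M : Set (Outcome n)) (t : BuyerType n → Outcome n),
          IRMenu M → IsChoice M t →
          menuSize M ≤ ((⌊(2 : ℝ) ^ ((n : ℝ) / 10)⌋₊ : ℕ) : ℕ∞) →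
          revenue t (Measure.pi fun _ : Fin n => coin) <
            ENNReal.ofReal ((1 - 1 / (10 * (n : ℝ))) * ((n : ℝ) / 2))) ∧
      RevC ⌊(2 : ℝ) ^ ((n : ℝ) / 10)⌋₊ (Measure.pi fun _ : Fin n => coin) ≤
        ENNReal.ofReal (1 - 1 / (10 * (n : ℝ))) * Rev (Measure.pi fun _ : Fin n => coin) := by
  refine ⟨20000, fun n hn => ⟨fun M t hM ht hsize => rev_lt n hn M t hM ht hsize, ?_⟩⟩
  have hpart1 : RevC ⌊(2 : ℝ) ^ ((n : ℝ) / 10)⌋₊ (Measure.pi fun _ : Fin n => coin)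
      ≤ ENNReal.ofReal ((1 - 1 / (10 * (n : ℝ))) * ((n : ℝ) / 2)) := by
    refine iSup_le fun Mt => iSup_le fun hMt => ?_
    exact le_of_lt (rev_lt n hn Mt.1 Mt.2 hMt.1 hMt.2.1 hMt.2.2)
  have hnn : (0:ℝ) ≤ 1 - 1 / (10 * (n : ℝ)) := by
    have hbig : (20000:ℝ) ≤ (n:ℝ) := by exact_mod_cast hn
    have : 1 / (10 * (n:ℝ)) ≤ 1 := by
      rw [div_le_one (by positivity)]
      linarith
    linarith
  have hRev : ENNReal.ofReal ((n:ℝ)/2) ≤ Rev (Measure.pi fun _ : Fin n => coin) := by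
    rw [← ip_revenue n (by omega)]
    rw [Rev]
    refine le_iSup_of_le (ipMenu n, fun v => ipChoice v) ?_
    rw [iSup_pos ⟨ipMenu_IR n, ipChoice_isChoice n⟩]
  calc RevC ⌊(2 : ℝ) ^ ((n : ℝ) / 10)⌋₊ (Measure.pi fun _ : Fin n => coin)
      ≤ ENNReal.ofReal ((1 - 1 / (10 * (n : ℝ))) * ((n : ℝ) / 2)) := hpart1
    _ = ENNReal.ofReal (1 - 1 / (10 * (n : ℝ))) * ENNReal.ofReal ((n : ℝ) / 2) :=
        ENNReal.ofReal_mul hnn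
    _ ≤ ENNReal.ofReal (1 - 1 / (10 * (n : ℝ))) * Rev (Measure.pi fun _ : Fin n => coin) :=
        mul_le_mul_right hRev _


end
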